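/- Let L be a loop with multiplication group Mult(L) and inner mapping group Inn(L). Then the normalizer of Inn(L) in Mult(L) is the internal direct product of Inn(L) and the centre Z(Mult(L)) of Mult(L); that is, N_{Mult(L)}(Inn(L)) = Inn(L)·Z(Mult(L)) and Inn(L) ∩ Z(Mult(L)) is trivial. -/

import Mathlib

/-- A loop: a binary operation with two-sided identity such that all left and
right translations are bijections. -/
structure LoopStruct (L : Type*) where
  mul : L → L → L
  e : L
  one_mul : ∀ x, mul e x = x
  mul_one : ∀ x, mul x e = x
  left_bij : ∀ a, Function.Bijective (mul a)
  right_bij : ∀ a, Function.Bijective (fun x => mul x a)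

/-- The left translation `λ_a` as a permutation of `L`. -/
noncomputable def leftTrans {L : Type*} (S : LoopStruct L) (a : L) : Equiv.Perm L :=
  Equiv.ofBijective _ (S.left_bij a)

/-- The right translation `ρ_a` as a permutation of `L`. -/
noncomputable def rightTrans {L : Type*} (S : LoopStruct L) (a : L) : Equiv.Perm L :=
  Equiv.ofBijective _ (S.right_bij a)

/-- The multiplication group `Mult(L)`. -/
noncomputable def MultGroup {L : Type*} (S : LoopStruct L) : Subgroup (Equiv.Perm L) :=
  Subgroup.closure (Set.range (leftTrans S) ∪ Set.range (rightTrans S))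

/-- The inner mapping group `Inn(L)`: the stabilizer of `e` in `Mult(L)`. -/
noncomputable def InnGroup {L : Type*} (S : LoopStruct L) : Subgroup ↥(MultGroup S) :=
  Subgroup.comap (MultGroup S).subtype (MulAction.stabilizer (Equiv.Perm L) S.e)


theorem Equiv.Perm.inv_apply_self {α : Type*} (f : Equiv.Perm α) (x : α) : f⁻¹ (f x) = x :=
  f.symm_apply_apply x

theorem Equiv.Perm.apply_inv_self {α : Type*} (f : Equiv.Perm α) (x : α) : f (f⁻¹ x) = x :=
  f.apply_symm_apply x

section helpers
variable {L : Type} (S : LoopStruct L)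

lemma leftTrans_apply (a x : L) : leftTrans S a x = S.mul a x := rfl
lemma rightTrans_apply (a x : L) : rightTrans S a x = S.mul x a := rfl

lemma leftTrans_mem (a : L) : leftTrans S a ∈ MultGroup S :=
  Subgroup.subset_closure (Or.inl ⟨a, rfl⟩)

lemma rightTrans_mem (a : L) : rightTrans S a ∈ MultGroup S :=
  Subgroup.subset_closure (Or.inr ⟨a, rfl⟩)

lemma mem_inn_iff (g : ↥(MultGroup S)) :
    g ∈ InnGroup S ↔ (g : Equiv.Perm L) S.e = S.e := by
  rw [InnGroup, Subgroup.mem_comap, MulAction.mem_stabilizer_iff]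
  exact Iff.rfl

/-- If every inner mapping fixes `a`, then every `n ∈ Mult(L)` satisfies `n a = (n e)·a`. -/
lemma key (a : L) (hfix : ∀ h : Equiv.Perm L, h ∈ MultGroup S → h S.e = S.e → h a = a)
    (n : Equiv.Perm L) (hn : n ∈ MultGroup S) : n a = S.mul (n S.e) a := by
  set b := n S.e with hb
  have hmem : (leftTrans S b)⁻¹ * n ∈ MultGroup S :=
    mul_mem (inv_mem (leftTrans_mem S b)) hn
  have he : ((leftTrans S b)⁻¹ * n) S.e = S.e := by
    have hlb : leftTrans S b S.e = b := by rw [leftTrans_apply, S.mul_one]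
    have h1 : (leftTrans S b)⁻¹ ((leftTrans S b) S.e) = S.e :=
      Equiv.Perm.inv_apply_self _ _
    rw [hlb] at h1
    rw [Equiv.Perm.mul_apply]
    exact h1
  have := hfix _ hmem he
  rw [Equiv.Perm.mul_apply] at this
  have := congrArg (leftTrans S b) this
  rwa [Equiv.Perm.apply_inv_self, leftTrans_apply] at this
end helpers

/-- Niemenmaa-Kepka: the normalizer of `Inn(L)` in `Mult(L)` is the internal direct
product of `Inn(L)` and the centre of `Mult(L)`. -/
theorem normalizer_inn_eq_inn_mul_center (L : Type) (S : LoopStruct L) :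
    (∀ g : ↥(MultGroup S), g ∈ Subgroup.normalizer (InnGroup S : Set ↥(MultGroup S)) ↔
      ∃ i ∈ InnGroup S, ∃ z ∈ Subgroup.center ↥(MultGroup S), g = i * z) ∧
    InnGroup S ⊓ Subgroup.center ↥(MultGroup S) = ⊥ := by
  constructor
  · intro g
    constructor
    · intro hg
      set a := (g : Equiv.Perm L) S.e with ha
      -- every inner mapping fixes a
      have hfix : ∀ h : Equiv.Perm L, h ∈ MultGroup S → h S.e = S.e → h a = a := by
        intro h hm he
        have hInn : (⟨h, hm⟩ : ↥(MultGroup S)) ∈ InnGroup S := (mem_inn_iff S _).2 he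
        have h2 : g⁻¹ * ⟨h, hm⟩ * g ∈ InnGroup S := by
          have := (Subgroup.mem_normalizer_iff.mp hg (g⁻¹ * ⟨h, hm⟩ * g)).mpr
          apply this
          simpa [mul_assoc] using hInn
        have := (mem_inn_iff S _).1 h2
        simp only [Subgroup.coe_mul, Subgroup.coe_inv, Equiv.Perm.mul_apply] at this
        have := congrArg (g : Equiv.Perm L) this
        rwa [Equiv.Perm.apply_inv_self] at this
      set zP : Equiv.Perm L := rightTrans S a with hz
      have hzmem : zP ∈ MultGroup S := rightTrans_mem S a
      set z : ↥(MultGroup S) := ⟨zP, hzmem⟩ with hzdef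
      have hcomm : ∀ m : ↥(MultGroup S), m * z = z * m := by
        intro m
        apply Subtype.ext
        simp only [Subgroup.coe_mul]
        apply Equiv.ext
        intro x
        simp only [Equiv.Perm.mul_apply]
        have := key S a hfix ((m : Equiv.Perm L) * leftTrans S x)
          (mul_mem m.2 (leftTrans_mem S x))
        simp only [Equiv.Perm.mul_apply, leftTrans_apply] at this
        rw [S.mul_one] at this
        calc (m : Equiv.Perm L) (zP x) = (m : Equiv.Perm L) (S.mul x a) := rfl
          _ = S.mul ((m : Equiv.Perm L) x) a := this
          _ = zP ((m : Equiv.Perm L) x) := rfl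
      have hzc : z ∈ Subgroup.center ↥(MultGroup S) := Subgroup.mem_center_iff.mpr hcomm
      have hia : zP S.e = a := by rw [hz, rightTrans_apply, S.one_mul]
      have hiInn : z⁻¹ * g ∈ InnGroup S := by
        rw [mem_inn_iff]
        simp only [Subgroup.coe_mul, Subgroup.coe_inv, Equiv.Perm.mul_apply]
        rw [← ha, ← hia]
        exact Equiv.Perm.inv_apply_self _ _
      refine ⟨z⁻¹ * g, hiInn, z, hzc, ?_⟩
      rw [Subgroup.mem_center_iff] at hzc
      rw [hzc (z⁻¹ * g)]
      group
    · rintro ⟨i, hi, z, hz, rfl⟩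
      rw [Subgroup.mem_center_iff] at hz
      intro h
      have hconj : (i * z) * h * (i * z)⁻¹ = i * h * i⁻¹ := by
        rw [mul_inv_rev]
        have : z * h = h * z := (hz h).symm
        calc i * z * h * (z⁻¹ * i⁻¹) = i * (z * h) * z⁻¹ * i⁻¹ := by group
          _ = i * (h * z) * z⁻¹ * i⁻¹ := by rw [this]
          _ = i * h * i⁻¹ := by group
      rw [hconj]
      have hie : (i : Equiv.Perm L) S.e = S.e := (mem_inn_iff S i).1 hi
      constructor
      · intro hh
        rw [SetLike.mem_coe, mem_inn_iff] at hh ⊢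
        simp only [Subgroup.coe_mul, Subgroup.coe_inv, Equiv.Perm.mul_apply]
        rw [← hie, Equiv.Perm.inv_apply_self, hh, hie]
      · intro hh
        rw [SetLike.mem_coe, mem_inn_iff] at hh ⊢
        simp only [Subgroup.coe_mul, Subgroup.coe_inv, Equiv.Perm.mul_apply] at hh
        rw [← hie, Equiv.Perm.inv_apply_self] at hh
        exact (i : Equiv.Perm L).injective hh
  · rw [eq_bot_iff]
    intro z hz
    rw [Subgroup.mem_inf] at hz
    obtain ⟨hzi, hzc⟩ := hz
    rw [Subgroup.mem_center_iff] at hzc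
    have hze : (z : Equiv.Perm L) S.e = S.e := (mem_inn_iff S z).1 hzi
    have : (z : Equiv.Perm L) = 1 := by
      apply Equiv.ext
      intro x
      have hc := hzc ⟨leftTrans S x, leftTrans_mem S x⟩
      have hc' := congrArg (Subgroup.subtype _) hc
      simp only [Subgroup.coe_subtype, Subgroup.coe_mul] at hc'
      have := congrFun (congrArg (fun (σ : Equiv.Perm L) => (σ : L → L)) hc') S.e
      simp only [Equiv.Perm.coe_mul, Function.comp_apply] at this
      rw [hze] at this
      simpa [leftTrans_apply, S.mul_one] using this.symm
    rw [Subgroup.mem_bot]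
    exact Subtype.ext this
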